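/- Let S be a string and let w be a nonempty string with occ_S(w) ≥ 2. Then φ_S(w) ≤ min(|Σ^L_w|, |Σ^R_w|), where Σ^L_w = {α ∈ Σ : occ_S(αw) ≥ 1} is the (finite) set of left-extensions of w in S and Σ^R_w = {β ∈ Σ : occ_S(wβ) ≥ 1} is the (finite) set of right-extensions of w in S. -/

import Mathlib

variable {Γ : Type*} [DecidableEq Γ]

/-- `occ S w` is the number of occurrences of `w` as a contiguous substring of `S`,
i.e., the number of (0-based) indices `i` with `S[i..i+|w|-1] = w`. -/
def occ (S w : List Γ) : ℕ :=
  ((List.range S.length).filter fun i => (S.drop i).take w.length = w).length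

/-- `Phi S w` is the set of pairs `(α, β)` of characters such that
`occ S (αwβ) = occ S (αw) = occ S (wβ) = 1`. -/
def Phi (S w : List Γ) : Set (Γ × Γ) :=
  {p | occ S (p.1 :: (w ++ [p.2])) = 1 ∧ occ S (p.1 :: w) = 1 ∧ occ S (w ++ [p.2]) = 1}

/-- The net frequency of `w` in `S`. -/
noncomputable def phi (S w : List Γ) : ℕ := (Phi S w).ncard

lemma occ_pos_iff (S u : List Γ) :
    1 ≤ occ S u ↔ ∃ i, i < S.length ∧ (S.drop i).take u.length = u := by
  unfold occ
  constructor
  · intro h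
    obtain ⟨i, hi⟩ := List.exists_mem_of_length_pos h
    simp only [List.mem_filter, List.mem_range, decide_eq_true_eq] at hi
    exact ⟨i, hi.1, hi.2⟩
  · rintro ⟨i, h1, h2⟩
    exact List.length_pos_of_mem (by simp [List.mem_filter, List.mem_range, h1, h2] :
      i ∈ _)

lemma occ_one_unique {S u : List Γ} (h : occ S u = 1) {i j : ℕ}
    (hi : i < S.length) (hti : (S.drop i).take u.length = u)
    (hj : j < S.length) (htj : (S.drop j).take u.length = u) : i = j := by
  unfold occ at h
  obtain ⟨a, ha⟩ := List.length_eq_one_iff.mp h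
  have hmi : i ∈ (List.range S.length).filter fun i => decide ((S.drop i).take u.length = u) := by
    simp [List.mem_filter, List.mem_range, hi, hti]
  have hmj : j ∈ (List.range S.length).filter fun i => decide ((S.drop i).take u.length = u) := by
    simp [List.mem_filter, List.mem_range, hj, htj]
  rw [ha, List.mem_singleton] at hmi hmj
  rw [hmi, hmj]

/-- An occurrence of `α::(w++[β])` at `i` yields an occurrence of `α::w` at `i`. -/
lemma occ_left_ext {S w : List Γ} {α β : Γ} {i : ℕ}
    (h : (S.drop i).take (α :: (w ++ [β])).length = α :: (w ++ [β])) :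
    (S.drop i).take (α :: w).length = α :: w := by
  have h2 := congrArg (List.take (α :: w).length) h
  rw [List.take_take] at h2
  have hmin : min (α :: w).length (α :: (w ++ [β])).length = (α :: w).length := by
    simp
  rw [hmin] at h2
  rw [h2]
  show List.take (α :: w).length ((α :: w) ++ [β]) = α :: w
  exact List.take_left' rfl

/-- An occurrence of `α::u` at `i` (`u ≠ []`) yields an occurrence of `u` at `i+1`. -/
lemma occ_right_ext {S u : List Γ} {α : Γ} {i : ℕ} (hu : u ≠ [])
    (h : (S.drop i).take (α :: u).length = α :: u) :
    i + 1 < S.length ∧ (S.drop (i + 1)).take u.length = u := by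
  have hlen := congrArg List.length h
  simp only [List.length_take, List.length_drop, List.length_cons] at hlen
  have hle : u.length + 1 ≤ S.length - i := by omega
  have hpos : 0 < u.length := List.length_pos_iff.mpr hu
  refine ⟨by omega, ?_⟩
  have h2 := congrArg (List.drop 1) h
  rw [List.drop_take, List.drop_drop] at h2
  simpa using h2

/-- The net frequency of a repeat `w` in `S` is at most the minimum of the
number of its left-extensions and the number of its right-extensions in `S`. -/
theorem stmt4 (S w : List Γ) (hw : w ≠ []) (hrep : 2 ≤ occ S w) :
    phi S w ≤ min {α : Γ | 1 ≤ occ S (α :: w)}.ncard {β : Γ | 1 ≤ occ S (w ++ [β])}.ncard := by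
  have hSfin : ({a : Γ | a ∈ S} : Set Γ).Finite := S.finite_toSet
  -- the left- and right-extension sets are finite
  have hLsub : {α : Γ | 1 ≤ occ S (α :: w)} ⊆ {a : Γ | a ∈ S} := by
    intro α hα
    obtain ⟨i, _, ht⟩ := (occ_pos_iff S _).mp hα
    have : α ∈ (S.drop i).take (α :: w).length := by rw [ht]; exact List.mem_cons_self
    exact ((List.take_sublist _ _).trans (List.drop_sublist _ _)).mem this
  have hRsub : {β : Γ | 1 ≤ occ S (w ++ [β])} ⊆ {a : Γ | a ∈ S} := by
    intro β hβ
    obtain ⟨i, _, ht⟩ := (occ_pos_iff S _).mp hβ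
    have : β ∈ (S.drop i).take (w ++ [β]).length := by
      rw [ht]; exact List.mem_append_right _ (List.mem_singleton_self _)
    exact ((List.take_sublist _ _).trans (List.drop_sublist _ _)).mem this
  have hLfin : {α : Γ | 1 ≤ occ S (α :: w)}.Finite := hSfin.subset hLsub
  have hRfin : {β : Γ | 1 ≤ occ S (w ++ [β])}.Finite := hSfin.subset hRsub
  -- Prod.fst is injective on Phi
  have hinj1 : Set.InjOn Prod.fst (Phi S w) := by
    rintro p ⟨hp1, hp2, _⟩ q ⟨hq1, hq2, _⟩ hfst
    obtain ⟨i, hi, hti⟩ := (occ_pos_iff S _).mp hp1.ge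
    obtain ⟨j, hj, htj⟩ := (occ_pos_iff S _).mp hq1.ge
    have hij : i = j := by
      refine occ_one_unique hp2 hi (occ_left_ext hti) hj ?_
      rw [hfst] at *
      exact occ_left_ext htj
    rw [hij] at hti
    have heq : p.1 :: (w ++ [p.2]) = q.1 :: (w ++ [q.2]) := by
      rw [← hti, ← htj]
      congr 1
      simp
    have h12 : p.1 = q.1 ∧ p.2 = q.2 := by simpa using heq
    exact Prod.ext h12.1 h12.2
  -- Prod.snd is injective on Phi
  have hinj2 : Set.InjOn Prod.snd (Phi S w) := by
    rintro p ⟨hp1, _, hp3⟩ q ⟨hq1, _, hq3⟩ hsnd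
    obtain ⟨i, hi, hti⟩ := (occ_pos_iff S _).mp hp1.ge
    obtain ⟨j, hj, htj⟩ := (occ_pos_iff S _).mp hq1.ge
    have hne : w ++ [p.2] ≠ [] := by simp
    obtain ⟨hi1, hoi⟩ := occ_right_ext hne hti
    have hne' : w ++ [q.2] ≠ [] := by simp
    obtain ⟨hj1, hoj⟩ := occ_right_ext hne' htj
    have hij : i = j := by
      have : i + 1 = j + 1 := by
        refine occ_one_unique hp3 hi1 hoi hj1 ?_
        rw [hsnd] at *
        exact hoj
      omega
    rw [hij] at hti
    have heq : p.1 :: (w ++ [p.2]) = q.1 :: (w ++ [q.2]) := by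
      rw [← hti, ← htj]
      congr 1
      simp
    have h12 : p.1 = q.1 ∧ p.2 = q.2 := by simpa using heq
    exact Prod.ext h12.1 h12.2
  refine le_min ?_ ?_
  · calc phi S w = (Prod.fst '' Phi S w).ncard := (Set.ncard_image_of_injOn hinj1).symm
      _ ≤ _ := Set.ncard_le_ncard (by rintro _ ⟨p, hp, rfl⟩; exact hp.2.1.ge) hLfin
  · calc phi S w = (Prod.snd '' Phi S w).ncard := (Set.ncard_image_of_injOn hinj2).symm
      _ ≤ _ := Set.ncard_le_ncard (by rintro _ ⟨p, hp, rfl⟩; exact hp.2.2.ge) hRfin
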